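/- The quotient map π : N' → N_upp is an open map. -/
import Mathlib


open Topology Filter

/-- The identification relation on the disjoint union `Σ α, N α`:
`(α,p) ∼ (β,q)` iff (`α ≤ β` and `ψ_{αβ}(p) = q`) or (`β ≤ α` and `ψ_{βα}(q) = p`). -/
def simRel {A : Type*} [LinearOrder A] {N : A → Type*}
    (ψ : ∀ α β : A, α ≤ β → N α → N β) :
    (Σ α, N α) → (Σ α, N α) → Prop :=
  fun x y =>
    (∃ h : x.1 ≤ y.1, ψ x.1 y.1 h x.2 = y.2) ∨
    (∃ h : y.1 ≤ x.1, ψ y.1 x.1 h y.2 = x.2)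

theorem simRel_equivalence {A : Type*} [LinearOrder A] {N : A → Type*}
    [∀ α, TopologicalSpace (N α)]
    (ψ : ∀ α β : A, α ≤ β → N α → N β)
    (hψ : ∀ (α β : A) (h : α ≤ β), IsOpenEmbedding (ψ α β h))
    (hψid : ∀ (α : A) (h : α ≤ α), ψ α α h = id)
    (hψcomp : ∀ (α β γ : A) (h₁ : α ≤ β) (h₂ : β ≤ γ),
      (ψ β γ h₂) ∘ (ψ α β h₁) = ψ α γ (h₁.trans h₂)) :
    Equivalence (simRel ψ) := by
  constructor
  · intro x
    exact Or.inl ⟨le_refl _, by rw [hψid]; rfl⟩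
  · rintro x y (h | h)
    · exact Or.inr h
    · exact Or.inl h
  · rintro ⟨α, p⟩ ⟨β, q⟩ ⟨γ, r⟩ (⟨h₁, e₁⟩ | ⟨h₁, e₁⟩) (⟨h₂, e₂⟩ | ⟨h₂, e₂⟩) <;>
      dsimp only at *
    · exact Or.inl ⟨h₁.trans h₂, by rw [← e₂, ← e₁, ← Function.comp_apply (f := ψ β γ h₂),
        hψcomp α β γ h₁ h₂]⟩
    · rcases le_total α γ with h | h
      · refine Or.inl ⟨h, (hψ γ β h₂).injective ?_⟩
        rw [← Function.comp_apply (f := ψ γ β h₂), hψcomp α γ β h h₂, e₁, e₂]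
      · refine Or.inr ⟨h, (hψ α β h₁).injective ?_⟩
        rw [← Function.comp_apply (f := ψ α β h₁), hψcomp γ α β h h₁, e₂, e₁]
    · rcases le_total α γ with h | h
      · refine Or.inl ⟨h, ?_⟩
        rw [← e₁, ← Function.comp_apply (f := ψ α γ h), hψcomp β α γ h₁ h, e₂]
      · refine Or.inr ⟨h, ?_⟩
        rw [← e₂, ← Function.comp_apply (f := ψ γ α h), hψcomp β γ α h₂ h, e₁]
    · refine Or.inr ⟨h₂.trans h₁, ?_⟩
      rw [← e₁, ← e₂, ← Function.comp_apply (f := ψ β α h₁), hψcomp γ β α h₂ h₁]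

/-- The quotient map `π : N' → N_upp` is an open map. -/
theorem quotientMap_isOpenMap
    {M : Type*} [TopologicalSpace M]
    {A : Type*} [LinearOrder A] [Nonempty A]
    {N : A → Type*} [∀ α, TopologicalSpace (N α)]
    (ι : ∀ α, M → N α) (hι : ∀ α, IsOpenEmbedding (ι α))
    (ψ : ∀ α β : A, α ≤ β → N α → N β)
    (hψ : ∀ (α β : A) (h : α ≤ β), IsOpenEmbedding (ψ α β h))
    (hψι : ∀ (α β : A) (h : α ≤ β), (ψ α β h) ∘ (ι α) = ι β)
    (hψid : ∀ (α : A) (h : α ≤ α), ψ α α h = id)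
    (hψcomp : ∀ (α β γ : A) (h₁ : α ≤ β) (h₂ : β ≤ γ),
      (ψ β γ h₂) ∘ (ψ α β h₁) = ψ α γ (h₁.trans h₂)) :
    IsOpenMap (Quot.mk (simRel ψ) : (Σ α, N α) → Quot (simRel ψ)) := by
  have hsim := simRel_equivalence ψ hψ hψid hψcomp
  intro U hU
  rw [← isQuotientMap_quot_mk.isOpen_preimage]
  have key : (Quot.mk (simRel ψ)) ⁻¹' (Quot.mk (simRel ψ) '' U)
      = {x | ∃ y ∈ U, simRel ψ x y} := by
    ext x
    simp only [Set.mem_preimage, Set.mem_image, Set.mem_setOf_eq]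
    constructor
    · rintro ⟨y, hy, hxy⟩
      exact ⟨y, hy, hsim.symm (hsim.eqvGen_iff.mp (Quot.eqvGen_exact hxy))⟩
    · rintro ⟨y, hy, hxy⟩
      exact ⟨y, hy, (Quot.sound hxy).symm⟩
  rw [key]
  rw [isOpen_sigma_iff]
  intro β
  have heq : (Sigma.mk β) ⁻¹' {x | ∃ y ∈ U, simRel ψ x y}
      = ⋃ α, ((⋃ h : α ≤ β, ψ α β h '' ((Sigma.mk α) ⁻¹' U)) ∪
          ⋃ h : β ≤ α, ψ β α h ⁻¹' ((Sigma.mk α) ⁻¹' U)) := by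
    ext q
    simp only [Set.mem_preimage, Set.mem_setOf_eq, Set.mem_iUnion, Set.mem_union,
      Set.mem_image]
    constructor
    · rintro ⟨⟨α, p⟩, hp, (⟨h, e⟩ | ⟨h, e⟩)⟩
      · exact ⟨α, Or.inr ⟨h, by dsimp only at e; rw [e]; exact hp⟩⟩
      · exact ⟨α, Or.inl ⟨h, p, hp, e⟩⟩
    · rintro ⟨α, (⟨h, p, hp, e⟩ | ⟨h, hq⟩)⟩
      · exact ⟨⟨α, p⟩, hp, Or.inr ⟨h, e⟩⟩
      · exact ⟨⟨α, ψ β α h q⟩, hq, Or.inl ⟨h, rfl⟩⟩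
  rw [heq]
  apply isOpen_iUnion
  intro α
  apply IsOpen.union
  · exact isOpen_iUnion fun h =>
      (hψ α β h).isOpenMap _ (isOpen_sigma_iff.mp hU α)
  · exact isOpen_iUnion fun h =>
      (isOpen_sigma_iff.mp hU α).preimage (hψ β α h).continuous
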